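/- Let f : ℝ^d → ℝ^k be a polynomial map with rational coefficients and let p ∈ ℝ^d be a point whose coordinates are algebraically independent over ℚ. If the Jacobian matrix df|_p has linearly independent rows (rank k), then the coordinates of f(p) are algebraically independent over ℚ. -/

import Mathlib

open MvPolynomial

lemma coeff_pderiv' {σ : Type*} [DecidableEq σ] (i : σ) (f : MvPolynomial σ ℚ) (m : σ →₀ ℕ) :
    (MvPolynomial.pderiv i f).coeff m = (m i + 1 : ℚ) * f.coeff (m + Finsupp.single i 1) := by
  induction f using MvPolynomial.induction_on' with
  | add p q hp hq => simp [map_add, hp, hq, mul_add]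
  | monomial s a =>
    rw [pderiv_monomial, coeff_monomial, coeff_monomial]
    rcases Nat.eq_zero_or_pos (s i) with h | h
    · have h2 : ¬ (s = m + Finsupp.single i 1) := by
        intro hc; have := congrArg (fun t => t i) hc; simp [h] at this
      simp [h, h2]
    · by_cases hc : s = m + Finsupp.single i 1
      · have hsi : s i = m i + 1 := by
          have := congrArg (fun t => t i) hc; simpa using this
        have h1 : s - Finsupp.single i 1 = m := by
          rw [hc]; ext x
          by_cases hx : x = i <;> simp [hx, Finsupp.single_apply]
        rw [if_pos h1, if_pos hc, hsi]
        push_cast; ring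
      · have h1 : ¬ (s - Finsupp.single i 1 = m) := by
          intro h1
          apply hc
          ext x
          have := congrArg (fun t => t x) h1
          simp only [Finsupp.coe_tsub, Pi.sub_apply, Finsupp.coe_add, Pi.add_apply,
            Finsupp.single_apply] at this ⊢
          split_ifs at this ⊢ with h1
          · subst h1; omega
          · omega
        rw [if_neg h1, if_neg hc]
        ring

lemma pderiv_bind₁' {d k : ℕ} (P : Fin k → MvPolynomial (Fin d) ℚ) (j : Fin d)
    (Q : MvPolynomial (Fin k) ℚ) :
    MvPolynomial.pderiv j (MvPolynomial.bind₁ P Q) =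
      ∑ i : Fin k, MvPolynomial.bind₁ P (MvPolynomial.pderiv i Q) * MvPolynomial.pderiv j (P i) := by
  induction Q using MvPolynomial.induction_on with
  | C a => simp
  | add p q hp hq => simp [map_add, hp, hq, add_mul, Finset.sum_add_distrib]
  | mul_X q i hq =>
    rw [map_mul, bind₁_X_right, pderiv_mul, hq]
    have : ∀ i' : Fin k, MvPolynomial.bind₁ P (MvPolynomial.pderiv i' (q * X i)) *
        MvPolynomial.pderiv j (P i') =
        MvPolynomial.bind₁ P (MvPolynomial.pderiv i' q) * P i * MvPolynomial.pderiv j (P i')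
        + (if i' = i then MvPolynomial.bind₁ P q * MvPolynomial.pderiv j (P i') else 0) := by
      intro i'
      rw [pderiv_mul, map_add, map_mul, map_mul, bind₁_X_right]
      by_cases hi : i' = i
      · subst hi
        rw [if_pos rfl, pderiv_X_self, map_one, mul_one]
        ring
      · rw [if_neg hi, pderiv_X_of_ne (Ne.symm hi), map_zero, mul_zero, add_zero, add_zero]
    rw [Finset.sum_congr rfl (fun i' _ => this i'), Finset.sum_add_distrib,
      Finset.sum_ite_eq' Finset.univ i, if_pos (Finset.mem_univ i), Finset.sum_mul]
    congr 1
    exact Finset.sum_congr rfl fun x _ => by ring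

lemma totalDegree_pderiv_le' {σ : Type*} [DecidableEq σ] (i : σ) (f : MvPolynomial σ ℚ) {n : ℕ}
    (h : f.totalDegree ≤ n + 1) : (MvPolynomial.pderiv i f).totalDegree ≤ n := by
  apply Finset.sup_le
  intro m hm
  rw [MvPolynomial.mem_support_iff, coeff_pderiv'] at hm
  have h2 : f.coeff (m + Finsupp.single i 1) ≠ 0 := right_ne_zero_of_mul hm
  have h3 := MvPolynomial.le_totalDegree (MvPolynomial.mem_support_iff.mpr h2)
  have hsum : ((m + Finsupp.single i 1).sum fun _ e => e) = (m.sum fun _ e => e) + 1 := by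
    rw [Finsupp.sum_add_index' (fun _ => rfl) (fun _ _ _ => rfl), Finsupp.sum_single_index rfl]
  omega

lemma eq_zero_of_coeffs' {k : ℕ} (v : Fin k → ℝ) (Q : MvPolynomial (Fin k) ℚ)
    (h : ∀ m : Fin k →₀ ℕ, m ≠ 0 → Q.coeff m = 0) (hQ : MvPolynomial.aeval v Q = 0) : Q = 0 := by
  have hC : Q = MvPolynomial.C (Q.coeff 0) := by
    ext m
    rcases eq_or_ne m 0 with rfl | hm
    · simp
    · rw [h m hm, MvPolynomial.coeff_C, if_neg (Ne.symm hm)]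
  rw [hC] at hQ ⊢
  simp only [MvPolynomial.aeval_C] at hQ
  have : Q.coeff 0 = 0 := by exact_mod_cast (by simpa using hQ : ((Q.coeff 0 : ℚ) : ℝ) = 0)
  simp [this]


/-- If `f : ℝ^d → ℝ^k` is a polynomial map with rational coefficients,
`p` is generic (coordinates algebraically independent over `ℚ`), and the Jacobian of `f`
at `p` has linearly independent rows, then the coordinates of `f(p)` are algebraically
independent over `ℚ`. -/
theorem algebraicIndependent_image_of_jacobian_rows_independent
    {d k : ℕ} (P : Fin k → MvPolynomial (Fin d) ℚ)
    (p : Fin d → ℝ) (hp : AlgebraicIndependent ℚ p)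
    (hJ : LinearIndependent ℝ (fun i : Fin k => fun j : Fin d =>
      MvPolynomial.aeval p (MvPolynomial.pderiv j (P i)))) :
    AlgebraicIndependent ℚ (fun i : Fin k => MvPolynomial.aeval p (P i)) := by
  rw [algebraicIndependent_iff]
  set fp : Fin k → ℝ := fun i => MvPolynomial.aeval p (P i) with hfp
  have key : ∀ n : ℕ, ∀ Q : MvPolynomial (Fin k) ℚ, Q.totalDegree ≤ n →
      MvPolynomial.aeval fp Q = 0 → Q = 0 := by
    intro n
    induction n with
    | zero =>
      intro Q hdeg hQ
      refine eq_zero_of_coeffs' fp Q (fun m hm => ?_) hQ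
      by_contra hc
      have h0 := (MvPolynomial.totalDegree_eq_zero_iff _ Q).mp (Nat.le_zero.mp hdeg) m
        (MvPolynomial.mem_support_iff.mpr hc)
      exact hm (Finsupp.ext h0)
    | succ n ih =>
      intro Q hdeg hQ
      have hb : MvPolynomial.bind₁ P Q = 0 := by
        apply algebraicIndependent_iff.mp hp
        rw [MvPolynomial.aeval_bind₁]
        exact hQ
      have hder : ∀ i : Fin k, MvPolynomial.aeval fp (MvPolynomial.pderiv i Q) = 0 := by
        have hz := Fintype.linearIndependent_iff.mp hJ
          (fun i => MvPolynomial.aeval fp (MvPolynomial.pderiv i Q)) ?_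
        · exact hz
        · funext j
          have h1 : MvPolynomial.pderiv j (MvPolynomial.bind₁ P Q) = 0 := by
            rw [hb, map_zero]
          rw [pderiv_bind₁'] at h1
          have h2 := congrArg (MvPolynomial.aeval p) h1
          simp only [map_sum, map_mul, map_zero, MvPolynomial.aeval_bind₁] at h2
          simpa [Finset.sum_apply, smul_eq_mul] using h2
      have hpd : ∀ i : Fin k, MvPolynomial.pderiv i Q = 0 := fun i =>
        ih (MvPolynomial.pderiv i Q) (totalDegree_pderiv_le' i Q hdeg) (hder i)
      refine eq_zero_of_coeffs' fp Q (fun m hm => ?_) hQ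
      obtain ⟨i, hi⟩ : ∃ i, m i ≠ 0 := by
        by_contra hc
        push_neg at hc
        exact hm (Finsupp.ext hc)
      have h1 : (MvPolynomial.pderiv i Q).coeff (m - Finsupp.single i 1) = 0 := by
        rw [hpd i]; simp
      rw [coeff_pderiv'] at h1
      have hme : m - Finsupp.single i 1 + Finsupp.single i 1 = m := by
        ext x
        simp only [Finsupp.coe_tsub, Pi.sub_apply, Finsupp.coe_add, Pi.add_apply,
          Finsupp.single_apply]
        split_ifs with h2
        · subst h2; omega
        · omega
      rw [hme] at h1
      rcases mul_eq_zero.mp h1 with h2 | h2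
      · exact absurd h2 (by positivity)
      · exact h2
  intro Q hQ
  exact key Q.totalDegree Q le_rfl hQ
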